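/- For the parabolic surface singularity T_{2,4,4} (= X₉), i.e., the surface germ (V,0) ⊂ (ℂ³,0) defined by x⁴ + y⁴ + z² = 0, the Poincaré series of the arc filtration is P_{V,0}(t) = (1 − t⁴) / ( (1 − t)²(1 − t²) ), as an identity of formal power series. -/

import Mathlib

open Filter
open scoped Classical

/-- An arc on the hypersurface `{f = 0} ⊆ ℂ^N`: a germ of an analytic map
`φ : (ℂ,0) → (ℂ^N,0)` with `f ∘ φ ≡ 0` near `0`. -/
structure Arc (N : ℕ) (f : (Fin N → ℂ) → ℂ) where
  toFun : ℂ → Fin N → ℂ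
  analyticAt : AnalyticAt ℂ toFun 0
  map_zero : toFun 0 = 0
  vanish : ∀ᶠ τ in nhds 0, f (toFun τ) = 0

/-- The order of vanishing at `0` of a germ `ℂ → ℂ`: the exponent of the first
nonvanishing Taylor term, `⊤` for the zero germ (junk value `0` if not analytic). -/
noncomputable def ord (h : ℂ → ℂ) : ℕ∞ :=
  if hh : AnalyticAt ℂ h 0 then analyticOrderAt h 0 else 0

/-- `v(g)`: the minimal order of vanishing of `g` along arcs on `{f = 0} ⊆ ℂ^N`. -/
noncomputable def vArc (N : ℕ) (f g : (Fin N → ℂ) → ℂ) : ℕ∞ :=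
  ⨅ ψ : Arc N f, ord (g ∘ ψ.toFun)

/-- The `i`-th piece `F_i` of the arc filtration: analytic germs `g` with `v(g) ≥ i`. -/
def arcFiltration (N : ℕ) (f : (Fin N → ℂ) → ℂ) (i : ℕ) :
    Set ((Fin N → ℂ) → ℂ) :=
  {g | AnalyticAt ℂ g 0 ∧ (i : ℕ∞) ≤ vArc N f g}

/-- `dimQuotEq F i d` says that `dim_ℂ (F i / F (i+1)) = d`: there are `d` elements of
`F i` such that every element of `F i` has a unique expression as a linear combination
of them modulo `F (i+1)`. -/
def dimQuotEq {M : Type*} [AddCommGroup M] [Module ℂ M]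
    (F : ℕ → Set M) (i d : ℕ) : Prop :=
  ∃ b : Fin d → M, (∀ k, b k ∈ F i) ∧
    ∀ g ∈ F i, ∃! c : Fin d → ℂ, g - ∑ k, c k • b k ∈ F (i + 1)

/-- The stabilization `{f(x,y) - z² = 0} ⊆ ℂ³` of the plane curve `{f = 0}`. -/
def stab (f : (Fin 2 → ℂ) → ℂ) : (Fin 3 → ℂ) → ℂ :=
  fun w => f ![w 0, w 1] - w 2 ^ 2

/-- A reduced (squarefree) analytic germ at `0`: no square of a nonunit divides it. -/
def SquarefreeGerm {N : ℕ} (f : (Fin N → ℂ) → ℂ) : Prop :=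
  ∀ u : (Fin N → ℂ) → ℂ, AnalyticAt ℂ u 0 → u 0 = 0 →
    ¬ ∃ w : (Fin N → ℂ) → ℂ, AnalyticAt ℂ w 0 ∧
      ∀ᶠ x in nhds 0, f x = u x * u x * w x


open Asymptotics
open scoped Topology

/-- `τ^j = O(τ^i)` near `0` when `i ≤ j`. -/
lemma isBigO_pow_le {i j : ℕ} (h : i ≤ j) :
    (fun τ : ℂ => τ ^ j) =O[𝓝 0] (fun τ : ℂ => τ ^ i) := by
  rw [isBigO_iff]
  refine ⟨1, ?_⟩
  have h1 : ∀ᶠ τ : ℂ in 𝓝 0, ‖τ‖ ≤ 1 := by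
    have := Metric.closedBall_mem_nhds (0:ℂ) one_pos
    filter_upwards [this] with τ hτ
    simpa [Complex.dist_eq] using hτ
  filter_upwards [h1] with τ hτ
  rw [norm_pow, norm_pow, one_mul]
  exact pow_le_pow_of_le_one (norm_nonneg _) hτ h

/-- Extension of a big-O bound from the punctured neighborhood, for continuous functions. -/
lemma isBigO_of_puncture {h : ℂ → ℂ} (hc : ContinuousAt h 0) {i : ℕ}
    (hO : h =O[𝓝[≠] (0:ℂ)] (fun τ => τ ^ i)) : h =O[𝓝 0] (fun τ => τ ^ i) := by
  rw [isBigO_iff] at hO ⊢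
  obtain ⟨C, hC⟩ := hO
  refine ⟨C, ?_⟩
  have h0 : ‖h 0‖ ≤ C * ‖(0:ℂ) ^ i‖ := by
    have t1 : Tendsto (fun τ => ‖h τ‖) (𝓝[≠] (0:ℂ)) (𝓝 ‖h 0‖) :=
      (hc.norm.tendsto).mono_left nhdsWithin_le_nhds
    have t2 : Tendsto (fun τ : ℂ => C * ‖τ ^ i‖) (𝓝[≠] (0:ℂ)) (𝓝 (C * ‖(0:ℂ) ^ i‖)) := by
      exact ((continuous_const.mul ((continuous_pow i).norm)).tendsto 0).mono_left
        nhdsWithin_le_nhds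
    exact le_of_tendsto_of_tendsto t1 t2 hC
  rw [eventually_nhdsWithin_iff] at hC
  filter_upwards [hC] with τ hτ
  by_cases hτ0 : τ = 0
  · subst hτ0; exact h0
  · exact hτ hτ0

/-- A complex number has a square root. -/
lemma exists_sqrt (x : ℂ) : ∃ c : ℂ, c ^ 2 = x :=
  IsAlgClosed.exists_pow_nat_eq x two_pos

/-- Factorization: if `i ≤ order`, then `h τ = τ^i * u τ` near `0` with `u` analytic. -/
lemma fact_pow {h : ℂ → ℂ} (hh : AnalyticAt ℂ h 0) {i : ℕ} (hi : (i : ℕ∞) ≤ analyticOrderAt h 0) :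
    ∃ u : ℂ → ℂ, AnalyticAt ℂ u 0 ∧ ∀ᶠ τ in 𝓝 0, h τ = τ ^ i * u τ := by
  cases ho : analyticOrderAt h 0 with
  | top =>
      refine ⟨fun _ => 0, analyticAt_const, ?_⟩
      filter_upwards [analyticOrderAt_eq_top.mp ho] with τ hτ
      simp [hτ]
  | coe n =>
      obtain ⟨g, hg, hg0, hfac⟩ := (hh.analyticOrderAt_eq_natCast (n := n)).mp ho
      have hin : i ≤ n := by
        rw [ho] at hi; exact_mod_cast hi
      refine ⟨fun τ => τ ^ (n - i) * g τ, ((analyticAt_id.pow _).mul hg), ?_⟩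
      filter_upwards [hfac] with τ hτ
      rw [hτ]
      simp only [sub_zero, smul_eq_mul]
      rw [← mul_assoc, ← pow_add]
      congr 2
      omega

/-- `i ≤ order` iff `h = O(τ^i)` near `0`, for analytic `h`. -/
lemma order_le_iff_isBigO {h : ℂ → ℂ} (hh : AnalyticAt ℂ h 0) (i : ℕ) :
    (i : ℕ∞) ≤ analyticOrderAt h 0 ↔ h =O[𝓝 0] (fun τ => τ ^ i) := by
  constructor
  · intro hi
    obtain ⟨u, hu, hev⟩ := fact_pow hh hi
    have hb : (fun τ : ℂ => τ ^ i * u τ) =O[𝓝 0] (fun τ => τ ^ i) := by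
      rw [isBigO_iff]
      refine ⟨‖u 0‖ + 1, ?_⟩
      have : ∀ᶠ τ : ℂ in 𝓝 0, ‖u τ‖ ≤ ‖u 0‖ + 1 := by
        have := hu.continuousAt.norm.tendsto
        exact this.eventually_le_const (by linarith)
      filter_upwards [this] with τ hτ
      rw [norm_mul, mul_comm (‖u 0‖ + 1)]
      exact mul_le_mul_of_nonneg_left hτ (norm_nonneg _)
    exact (hb.congr' (by filter_upwards [hev] with τ hτ; exact hτ.symm) EventuallyEq.rfl)
  · intro hO
    by_contra hlt
    push_neg at hlt
    cases ho : analyticOrderAt h 0 with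
    | top => rw [ho] at hlt; exact (not_top_lt hlt)
    | coe n =>
        rw [ho] at hlt
        have hni : n < i := by exact_mod_cast hlt
        obtain ⟨g, hg, hg0, hfac⟩ := (hh.analyticOrderAt_eq_natCast (n := n)).mp ho
        rw [isBigO_iff] at hO
        obtain ⟨C, hC⟩ := hO
        have hev : ∀ᶠ τ in 𝓝[≠] (0:ℂ), ‖g τ‖ ≤ C * ‖τ‖ ^ (i - n) := by
          rw [eventually_nhdsWithin_iff]
          filter_upwards [hC, hfac] with τ hτ hfacτ hτ0
          have hτne : τ ≠ 0 := hτ0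
          have hτpos : 0 < ‖τ‖ := by simpa [norm_pos_iff] using hτne
          rw [hfacτ] at hτ
          simp only [sub_zero, smul_eq_mul, norm_mul, norm_pow] at hτ
          have key : ‖g τ‖ * ‖τ‖ ^ n ≤ (C * ‖τ‖ ^ (i - n)) * ‖τ‖ ^ n := by
            have he : C * ‖τ‖ ^ i = (C * ‖τ‖ ^ (i - n)) * ‖τ‖ ^ n := by
              rw [mul_assoc, ← pow_add]; congr 2; omega
            rw [← he]
            calc ‖g τ‖ * ‖τ‖ ^ n = ‖τ‖ ^ n * ‖g τ‖ := by ring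
            _ ≤ C * ‖τ‖ ^ i := hτ
          exact le_of_mul_le_mul_right key (pow_pos hτpos n)
        have t1 : Tendsto (fun τ => ‖g τ‖) (𝓝[≠] (0:ℂ)) (𝓝 ‖g 0‖) :=
          (hg.continuousAt.norm.tendsto).mono_left nhdsWithin_le_nhds
        have t2 : Tendsto (fun τ : ℂ => C * ‖τ‖ ^ (i - n)) (𝓝[≠] (0:ℂ)) (𝓝 (C * ‖(0:ℂ)‖ ^ (i-n))) :=
          ((continuous_const.mul (continuous_norm.pow _)).tendsto 0).mono_left nhdsWithin_le_nhds
        have hg00 : ‖g 0‖ ≤ C * ‖(0:ℂ)‖ ^ (i - n) := le_of_tendsto_of_tendsto t1 t2 hev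
        have : ‖g 0‖ ≤ 0 := by
          simpa [zero_pow (by omega : i - n ≠ 0)] using hg00
        exact hg0 (by simpa using le_antisymm this (norm_nonneg _))

/-- An analytic function vanishing at `0` has order at least 1. -/
lemma one_le_order {h : ℂ → ℂ} (hh : AnalyticAt ℂ h 0) (h0 : h 0 = 0) :
    (1 : ℕ∞) ≤ analyticOrderAt h 0 := by
  rw [ENat.one_le_iff_ne_zero]
  intro hc
  obtain ⟨g, hg, hg0, hfac⟩ := (hh.analyticOrderAt_eq_natCast (n := 0)).mp (by exact_mod_cast hc)
  have := hfac.self_of_nhds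
  simp only [pow_zero, one_smul] at this
  exact hg0 (this ▸ h0)

/-- If a polynomial function is `O(τ^i)` at `0`, its low coefficients vanish. -/
lemma coeff_zero_of_isBigO :
    ∀ (i J : ℕ) (a : ℕ → ℂ),
      ((fun τ : ℂ => ∑ j ∈ Finset.range J, a j * τ ^ j) =O[𝓝 0] (fun τ => τ ^ i)) →
      ∀ j, j < i → j < J → a j = 0 := by
  intro i
  induction i with
  | zero => intro J a _ j hj; omega
  | succ i IH =>
      intro J a hO j hj hjJ
      match J, hjJ with
      | (J'+1), _ =>
        -- a 0 = 0 from evaluating the bound at τ = 0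
        have ha0 : a 0 = 0 := by
          rw [isBigO_iff] at hO
          obtain ⟨C, hC⟩ := hO
          have h00 := hC.self_of_nhds
          simp only [norm_pow, norm_zero, zero_pow (by omega : i + 1 ≠ 0), mul_zero] at h00
          have hval : ∑ j ∈ Finset.range (J' + 1), a j * (0:ℂ) ^ j = a 0 := by
            rw [Finset.sum_range_succ']
            simp
          rw [hval] at h00
          simpa using le_antisymm h00 (norm_nonneg _)
        -- the quotient polynomial
        set g : ℂ → ℂ := fun τ => ∑ j ∈ Finset.range J', a (j + 1) * τ ^ j with hg
        have hfg : ∀ τ : ℂ, (∑ j ∈ Finset.range (J' + 1), a j * τ ^ j) = τ * g τ := by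
          intro τ
          rw [Finset.sum_range_succ', ha0, Finset.mul_sum]
          simp only [zero_mul, add_zero]
          congr 1
          funext j
          ring
        have hgO : g =O[𝓝 0] (fun τ : ℂ => τ ^ i) := by
          apply isBigO_of_puncture
          · apply Continuous.continuousAt
            exact continuous_finset_sum _ (fun j _ => continuous_const.mul (continuous_pow j))
          · rw [isBigO_iff] at hO ⊢
            obtain ⟨C, hC⟩ := hO
            refine ⟨C, ?_⟩
            rw [eventually_nhdsWithin_iff]
            filter_upwards [hC] with τ hτ hτ0
            have hτne : (τ:ℂ) ≠ 0 := hτ0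
            have hτpos : 0 < ‖τ‖ := by simpa [norm_pos_iff] using hτne
            rw [hfg τ] at hτ
            simp only [norm_mul, norm_pow] at hτ ⊢
            have : ‖τ‖ * ‖g τ‖ ≤ (C * ‖τ‖ ^ i) * ‖τ‖ := by
              calc ‖τ‖ * ‖g τ‖ ≤ C * ‖τ‖ ^ (i+1) := hτ
              _ = (C * ‖τ‖ ^ i) * ‖τ‖ := by ring
            have := le_of_mul_le_mul_right (by linarith [this] :
              ‖g τ‖ * ‖τ‖ ≤ (C * ‖τ‖ ^ i) * ‖τ‖) hτpos
            linarith [this]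
        match j with
        | 0 => exact ha0
        | (j'+1) =>
            exact IH J' (fun m => a (m + 1)) hgO j' (by omega) (by omega)

/-- The weights `(1,1,2)` on the three coordinates. -/
def wt : Fin 3 → ℕ := ![1, 1, 2]

lemma wt_pos (k : Fin 3) : 1 ≤ wt k := by fin_cases k <;> simp [wt]
lemma wt_le_two (k : Fin 3) : wt k ≤ 2 := by fin_cases k <;> simp [wt]

/-- The weighted parametrized curve `τ ↦ (p₀τ, p₁τ, p₂τ²)`. -/
def curve (p : Fin 3 → ℂ) (τ : ℂ) : Fin 3 → ℂ := fun k => p k * τ ^ wt k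

/-- Monomial function with exponents `m`. -/
def mfun (m : ℕ × ℕ × ℕ) : (Fin 3 → ℂ) → ℂ :=
  fun q => q 0 ^ m.1 * q 1 ^ m.2.1 * q 2 ^ m.2.2

def wdeg (m : ℕ × ℕ × ℕ) : ℕ := m.1 + m.2.1 + 2 * m.2.2

/-- The cone `{p₀⁴ + p₁⁴ + p₂² = 0}`. -/
def Cone (p : Fin 3 → ℂ) : Prop := p 0 ^ 4 + p 1 ^ 4 + p 2 ^ 2 = 0

/-- weighted sum of a multi-index -/
def wsum {n : ℕ} (r : Fin n → Fin 3) : ℕ := ∑ l, wt (r l)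

/-- standard basis vector -/
def evec (k : Fin 3) : Fin 3 → ℂ := Pi.single k 1

noncomputable def kap (P : FormalMultilinearSeries ℂ (Fin 3 → ℂ) ℂ)
    (x : Σ n : ℕ, (Fin n → Fin 3)) : ℂ :=
  P x.1 (fun l => evec (x.2 l))

def cnt (x : Σ n : ℕ, (Fin n → Fin 3)) : ℕ × ℕ × ℕ :=
  ((Finset.univ.filter fun l => x.2 l = 0).card,
   (Finset.univ.filter fun l => x.2 l = 1).card,
   (Finset.univ.filter fun l => x.2 l = 2).card)

noncomputable def Qfun (P : FormalMultilinearSeries ℂ (Fin 3 → ℂ) ℂ) (N j : ℕ) :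
    (Fin 3 → ℂ) → ℂ :=
  fun q => ∑ x ∈ (Finset.range N).sigma
      (fun n => Finset.univ.filter (fun r : Fin n → Fin 3 => wsum r = j)),
    kap P x * mfun (cnt x) q

lemma vec_decomp (v : Fin 3 → ℂ) : v = ∑ k : Fin 3, v k • evec k := by
  funext k'
  simp [evec, Finset.sum_apply, Pi.single_apply]

lemma prod_eq_mfun {n : ℕ} (r : Fin n → Fin 3) (q : Fin 3 → ℂ) :
    (∏ l, q (r l)) = mfun (cnt ⟨n, r⟩) q := by
  have h := Finset.prod_fiberwise_of_maps_to (s := (Finset.univ : Finset (Fin n)))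
    (t := (Finset.univ : Finset (Fin 3))) (g := r)
    (fun l _ => Finset.mem_univ (r l)) (fun l => q (r l))
  rw [← h]
  have : ∀ k : Fin 3, (∏ l ∈ Finset.univ.filter (fun l => r l = k), q (r l))
      = q k ^ (Finset.univ.filter (fun l => r l = k)).card := by
    intro k
    rw [Finset.prod_congr rfl (fun l hl => by
      rw [(Finset.mem_filter.mp hl).2]), Finset.prod_const]
  rw [Finset.prod_congr rfl (fun k _ => this k)]
  rw [Fin.prod_univ_three]
  rfl

lemma wsum_eq_wdeg {n : ℕ} (r : Fin n → Fin 3) : wsum r = wdeg (cnt ⟨n, r⟩) := by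
  have h := Finset.sum_fiberwise_of_maps_to (s := (Finset.univ : Finset (Fin n)))
    (t := (Finset.univ : Finset (Fin 3))) (g := r)
    (fun l _ => Finset.mem_univ (r l)) (fun l => wt (r l))
  unfold wsum
  rw [← h]
  have : ∀ k : Fin 3, (∑ l ∈ Finset.univ.filter (fun l => r l = k), wt (r l))
      = (Finset.univ.filter (fun l => r l = k)).card * wt k := by
    intro k
    rw [Finset.sum_congr rfl (fun l hl => by rw [(Finset.mem_filter.mp hl).2]),
      Finset.sum_const, smul_eq_mul]
  rw [Finset.sum_congr rfl (fun k _ => this k), Fin.sum_univ_three]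
  simp [cnt, wdeg, wt]
  ring

lemma wsum_le {n : ℕ} (r : Fin n → Fin 3) : wsum r ≤ 2 * n := by
  unfold wsum
  calc ∑ l, wt (r l) ≤ ∑ _l : Fin n, 2 := Finset.sum_le_sum (fun l _ => wt_le_two (r l))
  _ = 2 * n := by simp [mul_comm]

lemma expand_term (P : FormalMultilinearSeries ℂ (Fin 3 → ℂ) ℂ) (n : ℕ) (c : Fin 3 → ℂ) :
    P n (fun _ => ∑ k : Fin 3, c k • evec k)
      = ∑ r : Fin n → Fin 3, (∏ l, c (r l)) * kap P ⟨n, r⟩ := by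
  have h1 := (P n).toMultilinearMap.map_sum
    (fun (_l : Fin n) (k : Fin 3) => c k • evec k)
  rw [show ((P n) fun _ => ∑ k : Fin 3, c k • evec k)
      = ((P n).toMultilinearMap fun _ => ∑ k : Fin 3, c k • evec k) from rfl, h1]
  apply Finset.sum_congr rfl
  intro r _
  have h2 := (P n).toMultilinearMap.map_smul_univ (fun l => c (r l))
    (fun l => evec (r l))
  rw [h2, smul_eq_mul]
  rfl

/-- The key expansion of a partial sum along a weighted curve. -/
lemma partialSum_expand (P : FormalMultilinearSeries ℂ (Fin 3 → ℂ) ℂ) (N : ℕ)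
    (q : Fin 3 → ℂ) (τ : ℂ) :
    P.partialSum N (curve q τ) = ∑ j ∈ Finset.range (2 * N + 1), Qfun P N j q * τ ^ j := by
  unfold FormalMultilinearSeries.partialSum
  have hcurve : curve q τ = ∑ k : Fin 3, (q k * τ ^ wt k) • evec k :=
    vec_decomp _
  calc
    ∑ n ∈ Finset.range N, P n (fun _ => curve q τ)
        = ∑ n ∈ Finset.range N, ∑ r : Fin n → Fin 3,
            ((∏ l, q (r l)) * τ ^ wsum r) * kap P ⟨n, r⟩ := by
          apply Finset.sum_congr rfl
          intro n _
          rw [hcurve, expand_term]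
          apply Finset.sum_congr rfl
          intro r _
          congr 1
          rw [Finset.prod_mul_distrib, Finset.prod_pow_eq_pow_sum]
          rfl
    _ = ∑ n ∈ Finset.range N, ∑ j ∈ Finset.range (2 * N + 1),
          ∑ r ∈ Finset.univ.filter (fun r : Fin n → Fin 3 => wsum r = j),
            ((∏ l, q (r l)) * τ ^ wsum r) * kap P ⟨n, r⟩ := by
          apply Finset.sum_congr rfl
          intro n hn
          rw [Finset.sum_fiberwise_of_maps_to]
          intro r _
          rw [Finset.mem_range]
          have := wsum_le r
          have : wsum r ≤ 2 * n := this
          have hn' := Finset.mem_range.mp hn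
          omega
    _ = ∑ j ∈ Finset.range (2 * N + 1), Qfun P N j q * τ ^ j := by
          rw [Finset.sum_comm]
          apply Finset.sum_congr rfl
          intro j _
          unfold Qfun
          rw [Finset.sum_sigma, Finset.sum_mul]
          apply Finset.sum_congr rfl
          intro n _
          rw [Finset.sum_mul]
          apply Finset.sum_congr rfl
          intro r hr
          have hj : wsum r = j := (Finset.mem_filter.mp hr).2
          rw [prod_eq_mfun, hj]
          ring

lemma curve_cont (u : ℂ → Fin 3 → ℂ) (hu : ContinuousAt u 0) :
    Tendsto (fun τ => curve (u τ) τ) (𝓝 0) (𝓝 0) := by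
  rw [tendsto_pi_nhds]
  intro k
  have h1 : ContinuousAt (fun τ => u τ k) 0 := (continuous_apply k).continuousAt.comp hu
  have : Tendsto (fun τ => u τ k * τ ^ wt k) (𝓝 0) (𝓝 (u 0 k * 0 ^ wt k)) :=
    h1.mul ((continuous_pow (wt k)).tendsto 0)
  simpa [curve, zero_pow (by have := wt_pos k; omega : wt k ≠ 0)] using this

/-- Taylor approximation along weighted curves with analytic/continuous coefficients. -/
lemma taylor_error {g : (Fin 3 → ℂ) → ℂ} {P : FormalMultilinearSeries ℂ (Fin 3 → ℂ) ℂ}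
    (hP : HasFPowerSeriesAt g P 0) (N : ℕ)
    (u : ℂ → Fin 3 → ℂ) (hu : ContinuousAt u 0) (w : ℂ → Fin 3 → ℂ)
    (hev : ∀ᶠ τ in 𝓝 0, w τ = curve (u τ) τ) :
    (fun τ => g (w τ) - ∑ j ∈ Finset.range (2 * N + 1), Qfun P N j (u τ) * τ ^ j)
      =O[𝓝 0] (fun τ => τ ^ N) := by
  have hBig : (fun y : Fin 3 → ℂ => g y - P.partialSum N y) =O[𝓝 0] (fun y => ‖y‖ ^ N) := by
    have := hP.isBigO_sub_partialSum_pow N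
    simpa using this
  have hw : Tendsto w (𝓝 0) (𝓝 0) := by
    refine Tendsto.congr' ?_ (curve_cont u hu)
    filter_upwards [hev] with τ hτ
    exact hτ.symm
  have hcomp : (fun τ => g (w τ) - P.partialSum N (w τ)) =O[𝓝 0] (fun τ => ‖w τ‖ ^ N) :=
    hBig.comp_tendsto hw
  have hwbound : (fun τ => ‖w τ‖ ^ N) =O[𝓝 0] (fun τ : ℂ => τ ^ N) := by
    rw [isBigO_iff]
    refine ⟨(‖u 0‖ + 1) ^ N, ?_⟩
    have h1 : ∀ᶠ τ : ℂ in 𝓝 0, ‖u τ‖ ≤ ‖u 0‖ + 1 :=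
      hu.norm.tendsto.eventually_le_const (by linarith)
    have h2 : ∀ᶠ τ : ℂ in 𝓝 0, ‖τ‖ ≤ 1 := by
      filter_upwards [Metric.closedBall_mem_nhds (0:ℂ) one_pos] with τ hτ
      simpa [Complex.dist_eq] using hτ
    filter_upwards [h1, h2, hev] with τ hτ1 hτ2 hτ3
    have hK : (0:ℝ) ≤ ‖u 0‖ + 1 := by positivity
    have hwτ : ‖w τ‖ ≤ (‖u 0‖ + 1) * ‖τ‖ := by
      rw [hτ3]
      rw [pi_norm_le_iff_of_nonneg (by positivity)]
      intro k
      calc ‖curve (u τ) τ k‖ = ‖u τ k‖ * ‖τ‖ ^ wt k := by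
            simp [curve, norm_mul, norm_pow]
      _ ≤ (‖u 0‖ + 1) * ‖τ‖ := by
          apply mul_le_mul
          · exact le_trans (norm_le_pi_norm _ k) hτ1
          · calc ‖τ‖ ^ wt k ≤ ‖τ‖ ^ 1 :=
                pow_le_pow_of_le_one (norm_nonneg _) hτ2 (wt_pos k)
            _ = ‖τ‖ := pow_one _
          · positivity
          · exact hK
    calc ‖‖w τ‖ ^ N‖ = ‖w τ‖ ^ N := by
          simp [Real.norm_eq_abs, abs_of_nonneg (pow_nonneg (norm_nonneg _) N)]
    _ ≤ ((‖u 0‖ + 1) * ‖τ‖) ^ N := pow_le_pow_left₀ (norm_nonneg _) hwτ N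
    _ = (‖u 0‖ + 1) ^ N * ‖τ ^ N‖ := by rw [mul_pow, norm_pow]
  refine (hcomp.trans hwbound).congr' ?_ EventuallyEq.rfl
  filter_upwards [hev] with τ hτ
  rw [hτ, partialSum_expand]

/-- Structure of `Qfun`: a finite combination of monomials of weighted degree `j`. -/
lemma Qfun_struct (P : FormalMultilinearSeries ℂ (Fin 3 → ℂ) ℂ) (N j : ℕ) :
    ∃ (s : Finset (Σ n : ℕ, (Fin n → Fin 3))) (κ : (Σ n : ℕ, (Fin n → Fin 3)) → ℂ)
      (mex : (Σ n : ℕ, (Fin n → Fin 3)) → ℕ × ℕ × ℕ),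
      (∀ x ∈ s, wdeg (mex x) = j) ∧ ∀ q, Qfun P N j q = ∑ x ∈ s, κ x * mfun (mex x) q := by
  refine ⟨(Finset.range N).sigma
      (fun n => Finset.univ.filter (fun r : Fin n → Fin 3 => wsum r = j)),
    kap P, cnt, ?_, fun q => rfl⟩
  rintro ⟨n, r⟩ hx
  rw [Finset.mem_sigma] at hx
  have := (Finset.mem_filter.mp hx.2).2
  rw [← wsum_eq_wdeg]
  exact this


/-- dimension of the `i`-th graded piece -/
def dimF : ℕ → ℕ := fun i => if i = 0 then 1 else 2 * i

/-- exponents of the `k`-th basis monomial in weighted degree `i` -/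
def exps (i k : ℕ) : ℕ × ℕ × ℕ :=
  if k ≤ i then (k, i - k, 0) else (k - (i + 1), i - 2 - (k - (i + 1)), 1)

lemma exps_wdeg {i k : ℕ} (hk : k < dimF i) : wdeg (exps i k) = i := by
  unfold dimF at hk
  unfold exps wdeg
  split_ifs with h
  · simp only
    omega
  · simp only
    split_ifs at hk <;> omega

/-- `G` agrees on the cone with a combination of the basis monomials. -/
def SpanS (i : ℕ) (G : (Fin 3 → ℂ) → ℂ) : Prop :=
  ∃ c : Fin (dimF i) → ℂ, ∀ p, Cone p → G p = ∑ k, c k * mfun (exps i k.val) p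

lemma SpanS_congr {i : ℕ} {G H : (Fin 3 → ℂ) → ℂ}
    (h : ∀ p, Cone p → G p = H p) (hH : SpanS i H) : SpanS i G := by
  obtain ⟨c, hc⟩ := hH
  exact ⟨c, fun p hp => (h p hp).trans (hc p hp)⟩

lemma SpanS_zero (i : ℕ) : SpanS i (fun _ => 0) :=
  ⟨fun _ => 0, fun p _ => by simp⟩

lemma SpanS_smul {i : ℕ} (a : ℂ) {G : (Fin 3 → ℂ) → ℂ} (hG : SpanS i G) :
    SpanS i (fun q => a * G q) := by
  obtain ⟨c, hc⟩ := hG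
  refine ⟨fun k => a * c k, fun p hp => ?_⟩
  show a * G p = _
  rw [hc p hp, Finset.mul_sum]
  exact Finset.sum_congr rfl (fun k _ => by ring)

lemma SpanS_add {i : ℕ} {G H : (Fin 3 → ℂ) → ℂ} (hG : SpanS i G) (hH : SpanS i H) :
    SpanS i (fun q => G q + H q) := by
  obtain ⟨c, hc⟩ := hG
  obtain ⟨e, he⟩ := hH
  refine ⟨fun k => c k + e k, fun p hp => ?_⟩
  show G p + H p = _
  rw [hc p hp, he p hp, ← Finset.sum_add_distrib]
  exact Finset.sum_congr rfl (fun k _ => by ring)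

lemma SpanS_sum {i : ℕ} {ι : Type*} (s : Finset ι) (G : ι → (Fin 3 → ℂ) → ℂ)
    (h : ∀ x ∈ s, SpanS i (G x)) : SpanS i (fun q => ∑ x ∈ s, G x q) := by
  induction s using Finset.induction_on with
  | empty => simpa using SpanS_zero i
  | insert a s' hx IH =>
      have h1 := h a (Finset.mem_insert_self a s')
      have h2 := IH (fun x hxs => h x (Finset.mem_insert_of_mem hxs))
      have := SpanS_add h1 h2
      refine SpanS_congr (fun p _ => ?_) this
      rw [Finset.sum_insert hx]

/-- Every monomial of weighted degree `i` agrees on the cone with a combination of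
the basis monomials. -/
lemma mono_reduce (i : ℕ) : ∀ (e a b : ℕ), a + b + 2 * e = i → SpanS i (mfun (a, b, e)) := by
  intro e
  induction e using Nat.strong_induction_on with
  | _ e IH =>
    match e with
    | 0 =>
        intro a b hab
        have hk : a < dimF i := by unfold dimF; split_ifs <;> omega
        refine ⟨fun k' => if k'.val = a then 1 else 0, fun p hp => ?_⟩
        rw [Finset.sum_eq_single (⟨a, hk⟩ : Fin (dimF i))]
        · have hex : exps i a = (a, b, 0) := by
            unfold exps
            rw [if_pos (by omega : a ≤ i)]
            have hb : i - a = b := by omega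
            rw [hb]
          simp [hex]
        · intro k _ hka
          show (if (k : ℕ) = _ then (1:ℂ) else 0) * _ = 0
          rw [if_neg, zero_mul]
          intro hc
          exact hka (Fin.ext hc)
        · intro hmem
          exact absurd (Finset.mem_univ _) hmem
    | 1 =>
        intro a b hab
        have hi2 : 2 ≤ i := by omega
        have hk : i + 1 + a < dimF i := by unfold dimF; split_ifs <;> omega
        refine ⟨fun k' => if k'.val = i + 1 + a then 1 else 0, fun p hp => ?_⟩
        rw [Finset.sum_eq_single (⟨i + 1 + a, hk⟩ : Fin (dimF i))]
        · have hex : exps i (i + 1 + a) = (a, b, 1) := by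
            unfold exps
            rw [if_neg (by omega)]
            have h1 : i + 1 + a - (i + 1) = a := by omega
            have h2 : i - 2 - a = b := by omega
            rw [h1, h2]
          simp [hex]
        · intro k _ hka
          show (if (k : ℕ) = _ then (1:ℂ) else 0) * _ = 0
          rw [if_neg, zero_mul]
          intro hc
          exact hka (Fin.ext hc)
        · intro hmem
          exact absurd (Finset.mem_univ _) hmem
    | (e' + 2) =>
        intro a b hab
        have h1 := IH e' (by omega) (a + 4) b (by omega)
        have h2 := IH e' (by omega) a (b + 4) (by omega)
        have := SpanS_add (SpanS_smul (-1) h1) (SpanS_smul (-1) h2)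
        refine SpanS_congr (fun p hp => ?_) this
        have hc : p 2 ^ 2 = -(p 0 ^ 4 + p 1 ^ 4) := by
          have := hp
          unfold Cone at this
          linear_combination this
        show mfun (a, b, e' + 2) p = -1 * mfun (a + 4, b, e') p + -1 * mfun (a, (b+4), e') p
        unfold mfun
        simp only
        rw [pow_add (p 2) e' 2, hc]
        ring
/-- Linear independence of the basis monomials on the cone. -/
lemma indep (i : ℕ) (δ : Fin (dimF i) → ℂ)
    (h : ∀ p, Cone p → ∑ k, δ k * mfun (exps i k.val) p = 0) : ∀ k, δ k = 0 := by
  by_cases hi : i = 0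
  · subst hi
    intro k
    have h0 := h (fun _ => 0) (by unfold Cone; simp)
    have hd : dimF 0 = 1 := rfl
    have hsum : ∑ k' : Fin (dimF 0), δ k' * mfun (exps 0 k'.val) (fun _ => 0)
        = δ k * mfun (exps 0 k.val) (fun _ => 0) := by
      apply Finset.sum_eq_single k
      · intro k' _ hne
        exact absurd (Fin.ext (by have := k'.isLt; have := k.isLt; omega)) hne
      · intro hmem
        exact absurd (Finset.mem_univ k) hmem
    rw [hsum] at h0
    have hkv : (k : ℕ) = 0 := by have := k.isLt; omega
    rw [hkv] at h0
    simp only [exps, mfun] at h0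
    norm_num at h0
    exact h0
  · -- first: the split evaluation
    have key : ∀ s t c' : ℂ, ∑ k : Fin (dimF i), δ k * mfun (exps i k.val) ![s, t, c']
        = (∑ k ∈ Finset.univ.filter (fun k : Fin (dimF i) => k.val ≤ i),
            δ k * (s ^ k.val * t ^ (i - k.val)))
          + (∑ k ∈ Finset.univ.filter (fun k : Fin (dimF i) => ¬ k.val ≤ i),
            δ k * (s ^ (k.val - (i+1)) * t ^ (i - 2 - (k.val - (i+1))))) * c' := by
      intro s t c'
      rw [← Finset.sum_filter_add_sum_filter_not Finset.univ (fun k : Fin (dimF i) => k.val ≤ i)]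
      congr 1
      · apply Finset.sum_congr rfl
        intro k hk
        have hkle : k.val ≤ i := (Finset.mem_filter.mp hk).2
        unfold exps mfun
        rw [if_pos hkle]
        simp [Matrix.cons_val_zero, Matrix.cons_val_one]
      · rw [Finset.sum_mul]
        apply Finset.sum_congr rfl
        intro k hk
        have hkgt : ¬ k.val ≤ i := (Finset.mem_filter.mp hk).2
        unfold exps mfun
        rw [if_neg hkgt]
        simp only [Matrix.cons_val_zero, Matrix.cons_val_one, Matrix.head_cons]
        have : (![s, t, c'] : Fin 3 → ℂ) 2 = c' := rfl
        rw [this]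
        ring
    have hAB : ∀ s t : ℂ,
        ((∑ k ∈ Finset.univ.filter (fun k : Fin (dimF i) => k.val ≤ i),
            δ k * (s ^ k.val * t ^ (i - k.val))) = 0)
        ∧ (s ^ 4 + t ^ 4 ≠ 0 →
          (∑ k ∈ Finset.univ.filter (fun k : Fin (dimF i) => ¬ k.val ≤ i),
            δ k * (s ^ (k.val - (i+1)) * t ^ (i - 2 - (k.val - (i+1))))) = 0) := by
      intro s t
      obtain ⟨c, hc⟩ := exists_sqrt (-(s ^ 4 + t ^ 4))
      have hp1 : Cone ![s, t, c] := by
        unfold Cone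
        show s ^ 4 + t ^ 4 + c ^ 2 = 0
        rw [hc]; ring
      have hp2 : Cone ![s, t, -c] := by
        unfold Cone
        show s ^ 4 + t ^ 4 + (-c) ^ 2 = 0
        rw [neg_pow, hc]; ring
      have e1 := h _ hp1
      have e2 := h _ hp2
      rw [key s t c] at e1
      rw [key s t (-c)] at e2
      set A := ∑ k ∈ Finset.univ.filter (fun k : Fin (dimF i) => k.val ≤ i),
        δ k * (s ^ k.val * t ^ (i - k.val)) with hA
      set B := ∑ k ∈ Finset.univ.filter (fun k : Fin (dimF i) => ¬ k.val ≤ i),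
        δ k * (s ^ (k.val - (i+1)) * t ^ (i - 2 - (k.val - (i+1)))) with hB
      have hA0 : A = 0 := by linear_combination (e1 + e2) / 2
      refine ⟨hA0, fun hne => ?_⟩
      have hcne : c ≠ 0 := by
        intro h0
        rw [h0] at hc
        simp at hc
        exact hne (by linear_combination hc)
      have hBc : B * c = 0 := by linear_combination (e1 - e2) / 2
      rcases mul_eq_zero.mp hBc with hB0 | hc0
      · exact hB0
      · exact absurd hc0 hcne
    intro k0
    by_cases hk0 : k0.val ≤ i
    · -- use polynomial PA
      set PA : Polynomial ℂ := ∑ k ∈ Finset.univ.filter (fun k : Fin (dimF i) => k.val ≤ i),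
        Polynomial.C (δ k) * Polynomial.X ^ (k.val) with hPA
      have heval : ∀ s : ℂ, PA.eval s = 0 := by
        intro s
        have := (hAB s 1).1
        rw [hPA]
        rw [Polynomial.eval_finset_sum]
        simp only [Polynomial.eval_mul, Polynomial.eval_C, Polynomial.eval_pow,
          Polynomial.eval_X]
        rw [← this]
        exact Finset.sum_congr rfl (fun k _ => by rw [one_pow, mul_one])
      have hPA0 : PA = 0 := by
        apply Polynomial.eq_zero_of_infinite_isRoot
        apply Set.Infinite.mono (s := (Set.univ : Set ℂ))
        · exact fun x _ => heval x
        · exact Set.infinite_univ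
      have hcoeff : PA.coeff k0.val = δ k0 := by
        rw [hPA, Polynomial.finset_sum_coeff]
        rw [Finset.sum_eq_single k0]
        · simp [Polynomial.coeff_C_mul, Polynomial.coeff_X_pow]
        · intro k hk hkk0
          simp only [Polynomial.coeff_C_mul, Polynomial.coeff_X_pow]
          rw [if_neg, mul_zero]
          intro hcc
          exact hkk0 (Fin.ext hcc.symm)
        · intro hmem
          exact absurd (Finset.mem_filter.mpr ⟨Finset.mem_univ k0, hk0⟩) hmem
      rw [← hcoeff, hPA0]
      simp
    · set PB : Polynomial ℂ := ∑ k ∈ Finset.univ.filter (fun k : Fin (dimF i) => ¬ k.val ≤ i),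
        Polynomial.C (δ k) * Polynomial.X ^ (k.val - (i+1)) with hPB
      have heval : ∀ s : ℂ, s ^ 4 + 1 ≠ 0 → PB.eval s = 0 := by
        intro s hs
        have := (hAB s 1).2 (by simpa using hs)
        rw [hPB, Polynomial.eval_finset_sum]
        simp only [Polynomial.eval_mul, Polynomial.eval_C, Polynomial.eval_pow,
          Polynomial.eval_X]
        rw [← this]
        exact Finset.sum_congr rfl (fun k _ => by rw [one_pow, mul_one])
      have hPB0 : PB = 0 := by
        apply Polynomial.eq_zero_of_infinite_isRoot
        have hfin : {x : ℂ | (Polynomial.X ^ 4 + Polynomial.C 1 : Polynomial ℂ).IsRoot x}.Finite := by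
          apply Polynomial.finite_setOf_isRoot
          intro hcc
          have := congrArg (Polynomial.coeff · 4) hcc
          simp [Polynomial.coeff_X_pow, Polynomial.coeff_one] at this
        apply Set.Infinite.mono (s := Set.univ \ {x : ℂ | (Polynomial.X ^ 4 + Polynomial.C 1 : Polynomial ℂ).IsRoot x})
        · rintro x ⟨-, hx⟩
          apply heval
          intro hcc
          exact hx (by simp [Polynomial.IsRoot]; linear_combination hcc)
        · exact Set.infinite_univ.diff hfin
      have hcoeff : PB.coeff (k0.val - (i+1)) = δ k0 := by
        rw [hPB, Polynomial.finset_sum_coeff]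
        rw [Finset.sum_eq_single k0]
        · simp [Polynomial.coeff_C_mul, Polynomial.coeff_X_pow]
        · intro k hk hkk0
          have hkgt : ¬ k.val ≤ i := (Finset.mem_filter.mp hk).2
          simp only [Polynomial.coeff_C_mul, Polynomial.coeff_X_pow]
          rw [if_neg, mul_zero]
          intro hcc
          apply hkk0
          apply Fin.ext
          omega
        · intro hmem
          exact absurd (Finset.mem_filter.mpr ⟨Finset.mem_univ k0, hk0⟩) hmem
      rw [← hcoeff, hPB0]
      simp

/-- The defining equation of `T_{2,4,4}`. -/
def fT : (Fin 3 → ℂ) → ℂ := fun w => w 0 ^ 4 + w 1 ^ 4 + w 2 ^ 2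

lemma mfun_analytic (m : ℕ × ℕ × ℕ) : AnalyticAt ℂ (mfun m) 0 := by
  unfold mfun
  exact ((((ContinuousLinearMap.proj (R := ℂ) (φ := fun _ : Fin 3 => ℂ) 0).analyticAt
    (0 : Fin 3 → ℂ)).pow _).mul
    (((ContinuousLinearMap.proj (R := ℂ) (φ := fun _ : Fin 3 => ℂ) 1).analyticAt _).pow _)).mul
    (((ContinuousLinearMap.proj (R := ℂ) (φ := fun _ : Fin 3 => ℂ) 2).analyticAt _).pow _)

lemma mfun_continuous (m : ℕ × ℕ × ℕ) : Continuous (mfun m) := by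
  unfold mfun
  exact (((continuous_apply (0 : Fin 3)).pow _).mul ((continuous_apply 1).pow _)).mul
    ((continuous_apply 2).pow _)

lemma mfun_curve (m : ℕ × ℕ × ℕ) (p : Fin 3 → ℂ) (τ : ℂ) :
    mfun m (curve p τ) = mfun m p * τ ^ wdeg m := by
  unfold mfun curve wdeg
  show (p 0 * τ ^ wt 0) ^ m.1 * (p 1 * τ ^ wt 1) ^ m.2.1 * (p 2 * τ ^ wt 2) ^ m.2.2 = _
  have h0 : wt 0 = 1 := rfl
  have h1 : wt 1 = 1 := rfl
  have h2 : wt 2 = 2 := rfl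
  rw [h0, h1, h2, mul_pow, mul_pow, mul_pow, ← pow_mul, ← pow_mul, ← pow_mul]
  rw [show 1 * m.1 = m.1 by ring, show 1 * m.2.1 = m.2.1 by ring]
  rw [show (p 0 ^ m.1 * τ ^ m.1 * (p 1 ^ m.2.1 * τ ^ m.2.1) * (p 2 ^ m.2.2 * τ ^ (2 * m.2.2)))
      = (p 0 ^ m.1 * p 1 ^ m.2.1 * p 2 ^ m.2.2) * (τ ^ m.1 * τ ^ m.2.1 * τ ^ (2 * m.2.2)) by ring]
  rw [← pow_add, ← pow_add]

lemma curve_analytic (p : Fin 3 → ℂ) : AnalyticAt ℂ (curve p) 0 := by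
  have : ∀ k : Fin 3, AnalyticAt ℂ (fun τ : ℂ => p k * τ ^ wt k) 0 :=
    fun k => analyticAt_const.mul (analyticAt_id.pow _)
  exact AnalyticAt.pi this

lemma curve_zero (p : Fin 3 → ℂ) : curve p 0 = 0 := by
  funext k
  simp [curve, zero_pow (by have := wt_pos k; omega : wt k ≠ 0)]

lemma fT_curve (p : Fin 3 → ℂ) (τ : ℂ) :
    fT (curve p τ) = (p 0 ^ 4 + p 1 ^ 4 + p 2 ^ 2) * τ ^ 4 := by
  unfold fT
  show (p 0 * τ ^ wt 0) ^ 4 + (p 1 * τ ^ wt 1) ^ 4 + (p 2 * τ ^ wt 2) ^ 2 = _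
  have h0 : wt 0 = 1 := rfl
  have h1 : wt 1 = 1 := rfl
  have h2 : wt 2 = 2 := rfl
  rw [h0, h1, h2]
  ring

/-- The arc associated to a point of the cone. -/
noncomputable def coneArc (p : Fin 3 → ℂ) (hp : Cone p) : Arc 3 fT where
  toFun := curve p
  analyticAt := curve_analytic p
  map_zero := curve_zero p
  vanish := by
    apply Filter.Eventually.of_forall
    intro τ
    rw [fT_curve, hp, zero_mul]

lemma comp_arc_analytic {g : (Fin 3 → ℂ) → ℂ} (hg : AnalyticAt ℂ g 0) (ψ : Arc 3 fT) :
    AnalyticAt ℂ (g ∘ ψ.toFun) 0 := by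
  have h0 : AnalyticAt ℂ g (ψ.toFun 0) := by rw [ψ.map_zero]; exact hg
  exact h0.comp ψ.analyticAt

/-- `v(g) ≥ i` iff `g` is `O(τ^i)` along every arc. -/
lemma vArc_ge_iff {g : (Fin 3 → ℂ) → ℂ} (hg : AnalyticAt ℂ g 0) (i : ℕ) :
    (i : ℕ∞) ≤ vArc 3 fT g ↔
      ∀ ψ : Arc 3 fT, (fun τ => g (ψ.toFun τ)) =O[𝓝 0] (fun τ => τ ^ i) := by
  unfold vArc
  rw [le_iInf_iff]
  apply forall_congr'
  intro ψ
  have ha := comp_arc_analytic hg ψ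
  rw [show ord (g ∘ ψ.toFun) = analyticOrderAt (g ∘ ψ.toFun) 0 from dif_pos ha]
  exact order_le_iff_isBigO ha i

/-- Vanishing of low-degree weighted Taylor coefficients on the cone. -/
lemma Q_vanish {g : (Fin 3 → ℂ) → ℂ} {P : FormalMultilinearSeries ℂ (Fin 3 → ℂ) ℂ}
    (hP : HasFPowerSeriesAt g P 0) {i N : ℕ} (hN : i ≤ N)
    (hO : ∀ p, Cone p → (fun τ => g (curve p τ)) =O[𝓝 0] (fun τ => τ ^ i)) :
    ∀ p, Cone p → ∀ j, j < i → Qfun P N j p = 0 := by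
  intro p hp
  have hT := taylor_error hP N (fun _ => p) continuousAt_const (fun τ => curve p τ)
    (Filter.Eventually.of_forall (fun τ => rfl))
  have hsum : (fun τ : ℂ => ∑ j ∈ Finset.range (2 * N + 1), Qfun P N j p * τ ^ j)
      =O[𝓝 0] (fun τ => τ ^ i) := by
    have h1 := (hO p hp).sub (hT.trans (isBigO_pow_le hN))
    refine h1.congr' (Filter.Eventually.of_forall (fun τ => by ring)) EventuallyEq.rfl
  intro j hj
  exact coeff_zero_of_isBigO i (2 * N + 1) (fun j => Qfun P N j p) hsum j hj (by omega)

lemma Qfun_cont (P : FormalMultilinearSeries ℂ (Fin 3 → ℂ) ℂ) (N j : ℕ) :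
    Continuous (Qfun P N j) := by
  unfold Qfun
  exact continuous_finset_sum _ (fun x _ => continuous_const.mul (mfun_continuous _))

/-- The main lower bound: cone bounds imply bounds along every arc. -/
lemma arc_bound {g : (Fin 3 → ℂ) → ℂ} (hg : AnalyticAt ℂ g 0)
    {P : FormalMultilinearSeries ℂ (Fin 3 → ℂ) ℂ} (hP : HasFPowerSeriesAt g P 0) (i : ℕ)
    (hO : ∀ p, Cone p → (fun τ => g (curve p τ)) =O[𝓝 0] (fun τ => τ ^ i))
    (ψ : Arc 3 fT) : (fun τ => g (ψ.toFun τ)) =O[𝓝 0] (fun τ => τ ^ i) := by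
  set N := i + 1 with hNdef
  have hQ := Q_vanish hP (by omega : i ≤ N) hO
  -- components of the arc
  have hψk : ∀ k : Fin 3, AnalyticAt ℂ (fun τ => ψ.toFun τ k) 0 := by
    intro k
    exact analyticAt_pi_iff.mp ψ.analyticAt k
  have hψk0 : ∀ k : Fin 3, ψ.toFun 0 k = 0 := fun k => congrFun ψ.map_zero k
  -- order bounds on components
  have hord01 : ∀ k : Fin 3, k = 0 ∨ k = 1 →
      ∃ u : ℂ → ℂ, AnalyticAt ℂ u 0 ∧ ∀ᶠ τ in 𝓝 0, ψ.toFun τ k = τ ^ wt k * u τ := by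
    rintro k hk
    have h1 : (1 : ℕ∞) ≤ analyticOrderAt (fun τ => ψ.toFun τ k) 0 := one_le_order (hψk k) (hψk0 k)
    have hwt : wt k = 1 := by rcases hk with rfl | rfl <;> rfl
    rw [hwt]
    exact fact_pow (hψk k) (by exact_mod_cast h1)
  obtain ⟨u0, hu0a, hu0⟩ := hord01 0 (Or.inl rfl)
  obtain ⟨u1, hu1a, hu1⟩ := hord01 1 (Or.inr rfl)
  -- the second component has order ≥ 2
  have hψ0O : (fun τ => ψ.toFun τ 0) =O[𝓝 0] (fun τ => τ ^ 1) :=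
    (order_le_iff_isBigO (hψk 0) 1).mp (by exact_mod_cast one_le_order (hψk 0) (hψk0 0))
  have hψ1O : (fun τ => ψ.toFun τ 1) =O[𝓝 0] (fun τ => τ ^ 1) :=
    (order_le_iff_isBigO (hψk 1) 1).mp (by exact_mod_cast one_le_order (hψk 1) (hψk0 1))
  have hsq : (fun τ => (ψ.toFun τ 2) ^ 2) =O[𝓝 0] (fun τ => τ ^ 4) := by
    have h04 : (fun τ => (ψ.toFun τ 0) ^ 4) =O[𝓝 0] (fun τ : ℂ => τ ^ 4) := by
      have := hψ0O.pow 4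
      refine this.congr (fun τ => rfl) (fun τ => by ring)
    have h14 : (fun τ => (ψ.toFun τ 1) ^ 4) =O[𝓝 0] (fun τ : ℂ => τ ^ 4) := by
      have := hψ1O.pow 4
      refine this.congr (fun τ => rfl) (fun τ => by ring)
    have hadd := (h04.add h14).neg_left
    refine hadd.congr' ?_ EventuallyEq.rfl
    filter_upwards [ψ.vanish] with τ hτ
    have : (ψ.toFun τ 0) ^ 4 + (ψ.toFun τ 1) ^ 4 + (ψ.toFun τ 2) ^ 2 = 0 := hτ
    linear_combination -this
  have hψ2O : (fun τ => ψ.toFun τ 2) =O[𝓝 0] (fun τ => τ ^ 2) := by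
    rw [isBigO_iff] at hsq ⊢
    obtain ⟨C, hC⟩ := hsq
    refine ⟨Real.sqrt |C|, ?_⟩
    filter_upwards [hC] with τ hτ
    have h1 : ‖ψ.toFun τ 2‖ ^ 2 ≤ |C| * ‖τ‖ ^ 4 := by
      calc ‖ψ.toFun τ 2‖ ^ 2 = ‖(ψ.toFun τ 2) ^ 2‖ := by rw [norm_pow]
      _ ≤ C * ‖τ ^ 4‖ := hτ
      _ ≤ |C| * ‖τ‖ ^ 4 := by
          rw [norm_pow]
          exact mul_le_mul_of_nonneg_right (le_abs_self C) (by positivity)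
    calc ‖ψ.toFun τ 2‖ = Real.sqrt (‖ψ.toFun τ 2‖ ^ 2) := (Real.sqrt_sq (norm_nonneg _)).symm
    _ ≤ Real.sqrt (|C| * ‖τ‖ ^ 4) := Real.sqrt_le_sqrt h1
    _ = Real.sqrt |C| * Real.sqrt (‖τ‖ ^ 4) := Real.sqrt_mul (abs_nonneg C) _
    _ = Real.sqrt |C| * ‖τ ^ 2‖ := by
        rw [show ‖τ‖ ^ 4 = (‖τ‖ ^ 2) ^ 2 by ring, Real.sqrt_sq (by positivity), norm_pow]
  obtain ⟨u2, hu2a, hu2⟩ := fact_pow (hψk 2) ((order_le_iff_isBigO (hψk 2) 2).mpr hψ2O)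
  -- the coefficient curve
  set uvec : ℂ → Fin 3 → ℂ := fun τ => ![u0 τ, u1 τ, u2 τ] with huvec
  have hucont : ContinuousAt uvec 0 := by
    rw [continuousAt_pi]
    intro k
    fin_cases k
    · exact hu0a.continuousAt
    · exact hu1a.continuousAt
    · exact hu2a.continuousAt
  have hev : ∀ᶠ τ in 𝓝 0, ψ.toFun τ = curve (uvec τ) τ := by
    filter_upwards [hu0, hu1, hu2] with τ h0 h1 h2
    funext k
    fin_cases k
    · show ψ.toFun τ 0 = uvec τ 0 * τ ^ wt 0
      rw [h0]; show τ ^ 1 * u0 τ = u0 τ * τ ^ 1; ring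
    · show ψ.toFun τ 1 = uvec τ 1 * τ ^ wt 1
      rw [h1]; show τ ^ 1 * u1 τ = u1 τ * τ ^ 1; ring
    · show ψ.toFun τ 2 = uvec τ 2 * τ ^ wt 2
      rw [h2]; show τ ^ 2 * u2 τ = u2 τ * τ ^ 2; ring
  have hT := taylor_error hP N uvec hucont ψ.toFun hev
  -- the coefficient curve lies on the cone for τ ≠ 0
  have hcone : ∀ᶠ τ in 𝓝 0, τ ≠ 0 → Cone (uvec τ) := by
    filter_upwards [hev, ψ.vanish] with τ h1 h2 hτ0
    have h3 : fT (ψ.toFun τ) = 0 := h2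
    rw [h1, fT_curve] at h3
    rcases mul_eq_zero.mp h3 with h4 | h4
    · exact h4
    · exact absurd (pow_eq_zero_iff (by omega) |>.mp h4) hτ0
  -- middle terms
  have hmid : (fun τ : ℂ => ∑ j ∈ Finset.Ico i (2 * N + 1), Qfun P N j (uvec τ) * τ ^ j)
      =O[𝓝 0] (fun τ => τ ^ i) := by
    apply Asymptotics.IsBigO.fun_sum
    intro j hj
    have hij : i ≤ j := (Finset.mem_Ico.mp hj).1
    have hq1 : (fun τ : ℂ => Qfun P N j (uvec τ)) =O[𝓝 0] (fun _ => (1 : ℂ)) := by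
      apply Filter.Tendsto.isBigO_one
      exact ((Qfun_cont P N j).continuousAt.comp hucont).tendsto
    have := hq1.mul (isBigO_pow_le hij)
    refine this.congr (fun τ => rfl) (fun τ => one_mul _)
  -- assemble on the punctured neighborhood
  have hpunct : (fun τ => g (ψ.toFun τ)) =O[𝓝[≠] (0:ℂ)] (fun τ => τ ^ i) := by
    have hDmid := (hT.trans (isBigO_pow_le (by omega : i ≤ N))).add hmid
    refine (hDmid.mono nhdsWithin_le_nhds).congr' ?_ EventuallyEq.rfl
    rw [EventuallyEq, eventually_nhdsWithin_iff]
    filter_upwards [hcone, hev] with τ h1 h2 hτ0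
    have hcτ : Cone (uvec τ) := h1 hτ0
    have hzero : ∑ j ∈ Finset.range i, Qfun P N j (uvec τ) * τ ^ j = 0 := by
      apply Finset.sum_eq_zero
      intro j hj
      rw [hQ (uvec τ) hcτ j (Finset.mem_range.mp hj), zero_mul]
    have hsplit : ∑ j ∈ Finset.range (2 * N + 1), Qfun P N j (uvec τ) * τ ^ j
        = ∑ j ∈ Finset.Ico i (2 * N + 1), Qfun P N j (uvec τ) * τ ^ j := by
      rw [← Finset.sum_range_add_sum_Ico _ (by omega : i ≤ 2 * N + 1), hzero, zero_add]
    have : g (ψ.toFun τ)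
        = (g (ψ.toFun τ) - ∑ j ∈ Finset.range (2 * N + 1), Qfun P N j (uvec τ) * τ ^ j)
          + ∑ j ∈ Finset.Ico i (2 * N + 1), Qfun P N j (uvec τ) * τ ^ j := by
      rw [← hsplit]; ring
    exact this.symm
  -- extend through the origin
  apply isBigO_of_puncture ?_ hpunct
  have : ContinuousAt g (ψ.toFun 0) := by
    rw [ψ.map_zero]; exact hg.continuousAt
  exact this.comp ψ.analyticAt.continuousAt

/-- Membership in the arc filtration, characterized via cone curves. -/
lemma mem_filtration_iff (g : (Fin 3 → ℂ) → ℂ) (i : ℕ) :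
    g ∈ arcFiltration 3 fT i ↔
      (AnalyticAt ℂ g 0 ∧
        ∀ p, Cone p → (fun τ => g (curve p τ)) =O[𝓝 0] (fun τ => τ ^ i)) := by
  constructor
  · rintro ⟨hg, hv⟩
    refine ⟨hg, fun p hp => ?_⟩
    have := (vArc_ge_iff hg i).mp hv (coneArc p hp)
    exact this
  · rintro ⟨hg, hO⟩
    refine ⟨hg, ?_⟩
    rw [vArc_ge_iff hg i]
    intro ψ
    obtain ⟨P, hP⟩ := id hg
    exact arc_bound hg hP i hO ψ

lemma SpanS_Qfun (P : FormalMultilinearSeries ℂ (Fin 3 → ℂ) ℂ) (i : ℕ) :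
    SpanS i (Qfun P (i + 1) i) := by
  obtain ⟨s, κ, mex, hdeg, heq⟩ := Qfun_struct P (i + 1) i
  refine SpanS_congr (fun p _ => heq p) ?_
  apply SpanS_sum
  intro x hx
  have hw := hdeg x hx
  have hred := mono_reduce i (mex x).2.2 (mex x).1 (mex x).2.1
    (by unfold wdeg at hw; omega)
  have hη : ((mex x).1, (mex x).2.1, (mex x).2.2) = mex x := rfl
  rw [hη] at hred
  exact SpanS_smul (κ x) hred

lemma sum_basis_analytic (i : ℕ) (c : Fin (dimF i) → ℂ) :
    AnalyticAt ℂ (∑ k : Fin (dimF i), c k • (fun q => mfun (exps i k.val) q)) 0 := by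
  have h : AnalyticAt ℂ (fun q : Fin 3 → ℂ =>
      ∑ k : Fin (dimF i), c k • mfun (exps i k.val) q) 0 := by
    apply Finset.analyticAt_fun_sum
    intro k _
    exact (analyticAt_const.mul (mfun_analytic (exps i k.val)) :
      AnalyticAt ℂ (fun q => c k * mfun (exps i k.val) q) 0)
  refine h.congr ?_
  apply Filter.Eventually.of_forall
  intro q
  rw [Finset.sum_apply]
  simp

lemma sum_basis_eval (i : ℕ) (c : Fin (dimF i) → ℂ) (q : Fin 3 → ℂ) :
    (∑ k : Fin (dimF i), c k • (fun q' => mfun (exps i k.val) q')) q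
      = ∑ k : Fin (dimF i), c k * mfun (exps i k.val) q := by
  rw [Finset.sum_apply]
  simp

lemma basis_curve (i : ℕ) (k : Fin (dimF i)) (p : Fin 3 → ℂ) (τ : ℂ) :
    mfun (exps i k.val) (curve p τ) = mfun (exps i k.val) p * τ ^ i := by
  rw [mfun_curve, exps_wdeg k.isLt]

/-- The main per-degree statement. -/
theorem quot_deg (i : ℕ) : dimQuotEq (arcFiltration 3 fT) i (dimF i) := by
  refine ⟨fun k => mfun (exps i k.val), ?_, ?_⟩
  · intro k
    rw [mem_filtration_iff]
    refine ⟨mfun_analytic _, fun p hp => ?_⟩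
    have heq : (fun τ => mfun (exps i k.val) (curve p τ))
        = fun τ => mfun (exps i k.val) p * τ ^ i := by
      funext τ; exact basis_curve i k p τ
    rw [heq]
    exact (isBigO_refl (fun τ : ℂ => τ ^ i) (𝓝 0)).const_mul_left _
  · intro g hgF
    obtain ⟨hg, hvO⟩ := (mem_filtration_iff g i).mp hgF
    obtain ⟨P, hP⟩ := id hg
    have hQv := Q_vanish hP (by omega : i ≤ i + 1) hvO
    obtain ⟨c, hc⟩ := SpanS_Qfun P i
    have hmem : ∀ c' : Fin (dimF i) → ℂ,
        (∀ p, Cone p → Qfun P (i+1) i p = ∑ k, c' k * mfun (exps i k.val) p) →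
        g - (∑ k, c' k • (fun q => mfun (exps i k.val) q)) ∈ arcFiltration 3 fT (i + 1) := by
      intro c' hc'
      rw [mem_filtration_iff]
      constructor
      · exact hg.sub (sum_basis_analytic i c')
      · intro p hp
        have hD := taylor_error hP (i + 1) (fun _ => p) continuousAt_const
          (fun τ => curve p τ) (Filter.Eventually.of_forall (fun τ => rfl))
        have hidentity : ∀ τ : ℂ,
            (g - (∑ k, c' k • (fun q => mfun (exps i k.val) q))) (curve p τ)
            = (∑ j ∈ Finset.Ico (i+1) (2*(i+1)+1), Qfun P (i+1) j p * τ ^ j)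
              + (g (curve p τ)
                - ∑ j ∈ Finset.range (2*(i+1)+1), Qfun P (i+1) j p * τ ^ j) := by
          intro τ
          have e1 : (g - (∑ k, c' k • (fun q => mfun (exps i k.val) q))) (curve p τ)
              = g (curve p τ) - (∑ k, c' k * mfun (exps i k.val) p) * τ ^ i := by
            rw [Pi.sub_apply, sum_basis_eval]
            congr 1
            rw [Finset.sum_mul]
            apply Finset.sum_congr rfl
            intro k _
            rw [basis_curve]
            ring
          rw [e1, ← hc' p hp]
          have hzero : ∑ j ∈ Finset.range i, Qfun P (i+1) j p * τ ^ j = 0 := by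
            apply Finset.sum_eq_zero
            intro j hj
            rw [hQv p hp j (Finset.mem_range.mp hj), zero_mul]
          have hsplit : ∑ j ∈ Finset.range (2*(i+1)+1), Qfun P (i+1) j p * τ ^ j
              = Qfun P (i+1) i p * τ ^ i
                + ∑ j ∈ Finset.Ico (i+1) (2*(i+1)+1), Qfun P (i+1) j p * τ ^ j := by
            rw [← Finset.sum_range_add_sum_Ico _ (by omega : i ≤ 2*(i+1)+1), hzero, zero_add]
            rw [Finset.sum_eq_sum_Ico_succ_bot (by omega : i < 2*(i+1)+1)]
          rw [hsplit]
          ring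
        have hO : (fun τ : ℂ =>
            (∑ j ∈ Finset.Ico (i+1) (2*(i+1)+1), Qfun P (i+1) j p * τ ^ j)
              + (g (curve p τ)
                - ∑ j ∈ Finset.range (2*(i+1)+1), Qfun P (i+1) j p * τ ^ j))
            =O[𝓝 0] (fun τ => τ ^ (i+1)) := by
          apply Asymptotics.IsBigO.add
          · apply Asymptotics.IsBigO.fun_sum
            intro j hj
            have hij : i + 1 ≤ j := (Finset.mem_Ico.mp hj).1
            exact (isBigO_pow_le hij).const_mul_left _
          · exact hD
        refine hO.congr' ?_ EventuallyEq.rfl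
        exact Filter.Eventually.of_forall (fun τ => (hidentity τ).symm)
    refine ⟨c, hmem c hc, ?_⟩
    intro c' hc'mem
    have hcmem := hmem c hc
    -- difference bound
    have hδ : ∀ p, Cone p → ∑ k, (c' k - c k) * mfun (exps i k.val) p = 0 := by
      intro p hp
      obtain ⟨-, hO1⟩ := (mem_filtration_iff _ (i+1)).mp hc'mem
      obtain ⟨-, hO2⟩ := (mem_filtration_iff _ (i+1)).mp hcmem
      have hdiff := (hO2 p hp).sub (hO1 p hp)
      have heq : (fun τ : ℂ =>
          (g - (∑ k, c k • (fun q => mfun (exps i k.val) q))) (curve p τ)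
          - (g - (∑ k, c' k • (fun q => mfun (exps i k.val) q))) (curve p τ))
          = fun τ => (∑ k, (c' k - c k) * mfun (exps i k.val) p) * τ ^ i := by
        funext τ
        rw [Pi.sub_apply, Pi.sub_apply, sum_basis_eval, sum_basis_eval, Finset.sum_mul]
        rw [show ∀ a b₁ b₂ : ℂ, a - b₁ - (a - b₂) = b₂ - b₁ from fun a b₁ b₂ => by ring]
        rw [← Finset.sum_sub_distrib]
        apply Finset.sum_congr rfl
        intro k _
        rw [basis_curve]
        ring
      rw [heq] at hdiff
      set L := ∑ k, (c' k - c k) * mfun (exps i k.val) p with hL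
      have hsum : (fun τ : ℂ => ∑ j ∈ Finset.range (i+1),
          (if j = i then L else 0) * τ ^ j) =O[𝓝 0] (fun τ => τ ^ (i+1)) := by
        refine hdiff.congr' ?_ EventuallyEq.rfl
        apply Filter.Eventually.of_forall
        intro τ
        show L * τ ^ i = ∑ j ∈ Finset.range (i+1), (if j = i then L else 0) * τ ^ j
        rw [Finset.sum_eq_single i]
        · rw [if_pos rfl]
        · intro j _ hji; rw [if_neg hji, zero_mul]
        · intro hmem'; exact absurd (Finset.mem_range.mpr (by omega)) hmem'
      have := coeff_zero_of_isBigO (i+1) (i+1) (fun j => if j = i then L else 0)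
        hsum i (by omega) (by omega)
      simpa using this
    have hδ0 := indep i (fun k => c' k - c k) hδ
    funext k
    have := hδ0 k
    exact sub_eq_zero.mp this

lemma series_key :
    (PowerSeries.mk fun i => (dimF i : ℤ)) * (1 - PowerSeries.X) ^ 2
      = 1 + PowerSeries.X ^ 2 := by
  set A := PowerSeries.mk fun i => (dimF i : ℤ) with hA
  have hsq : A * (1 - PowerSeries.X) ^ 2
      = A - A * PowerSeries.X - A * PowerSeries.X
          + (A * PowerSeries.X) * PowerSeries.X := by ring
  rw [hsq]
  ext n
  simp only [map_add, map_sub]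
  have hcoeffA : ∀ m, (PowerSeries.coeff m) A = (dimF m : ℤ) := fun m =>
    PowerSeries.coeff_mk _ _
  have hd0 : dimF 0 = 1 := rfl
  have hds : ∀ m : ℕ, m ≠ 0 → dimF m = 2 * m := fun m hm => by simp [dimF, hm]
  match n with
  | 0 =>
      rw [PowerSeries.coeff_zero_mul_X, PowerSeries.coeff_zero_mul_X]
      simp [hcoeffA, hd0, PowerSeries.coeff_one, PowerSeries.coeff_X_pow]
  | 1 =>
      rw [show (1:ℕ) = 0 + 1 from rfl, PowerSeries.coeff_succ_mul_X,
        PowerSeries.coeff_succ_mul_X, PowerSeries.coeff_zero_mul_X]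
      simp [hcoeffA, hd0, hds 1 one_ne_zero, PowerSeries.coeff_one,
        PowerSeries.coeff_X_pow]
  | (m + 2) =>
      rw [show m + 2 = (m + 1) + 1 from rfl, PowerSeries.coeff_succ_mul_X,
        PowerSeries.coeff_succ_mul_X, PowerSeries.coeff_succ_mul_X]
      rw [hcoeffA, hcoeffA, hcoeffA]
      have hrhs : (PowerSeries.coeff (R := ℤ) (m + 1 + 1)) 1
            + (PowerSeries.coeff (R := ℤ) (m + 1 + 1)) (PowerSeries.X ^ 2)
          = if m = 0 then 1 else 0 := by
        rw [PowerSeries.coeff_one, PowerSeries.coeff_X_pow]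
        by_cases hm : m = 0 <;> simp [hm]
      rw [hrhs]
      match m with
      | 0 => simp [hds 2 two_ne_zero, hds 1 one_ne_zero, hd0]
      | (m' + 1) =>
          rw [hds _ (by omega), hds _ (by omega), hds _ (by omega)]
          simp only [if_neg (Nat.succ_ne_zero m')]
          push_cast
          ring


/-- For the parabolic surface singularity `T_{2,4,4}` (= `X₉`),
i.e. `(V,0) ⊆ (ℂ³,0)` defined by `x⁴ + y⁴ + z² = 0`, the Poincaré series of the arc
filtration is `P_{V,0}(t) = (1 - t⁴)/((1 - t)²(1 - t²))`. -/
theorem poincare_series_T244 :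
    ∃ dimF : ℕ → ℕ,
      (∀ i, dimQuotEq
        (arcFiltration 3 (fun w : Fin 3 → ℂ => w 0 ^ 4 + w 1 ^ 4 + w 2 ^ 2)) i
        (dimF i)) ∧
      (PowerSeries.mk fun i => (dimF i : ℤ)) *
          ((1 - PowerSeries.X) ^ 2 * (1 - PowerSeries.X ^ 2))
        = 1 - PowerSeries.X ^ 4 := by
  refine ⟨dimF, fun i => quot_deg i, ?_⟩
  calc (PowerSeries.mk fun i => (dimF i : ℤ))
        * ((1 - PowerSeries.X) ^ 2 * (1 - PowerSeries.X ^ 2))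
      = ((PowerSeries.mk fun i => (dimF i : ℤ)) * (1 - PowerSeries.X) ^ 2)
        * (1 - PowerSeries.X ^ 2) := by ring
  _ = (1 + PowerSeries.X ^ 2) * (1 - PowerSeries.X ^ 2) := by rw [series_key]
  _ = 1 - PowerSeries.X ^ 4 := by ring
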